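/- arXiv:1511.04378 — 5 statements merged into one kernel-verified Lean document; each statement's English description precedes it below -/
import Mathlib

section
/- There exists a constant C > 0 such that for all x, y ∈ ℝ³ one has s(x−y)⁻¹ ≤ C (1 + |y|) s(x)⁻¹, i.e. s(x) ≤ C (1 + |y|) s(x−y). -/
open MeasureTheory Real
noncomputable section

abbrev E3 := EuclideanSpace ℝ (Fin 3)

/-- `s(x) := 1 + |x| - x₁`. -/
def sfun (x : E3) : ℝ := 1 + ‖x‖ - x 0

/-- first standard basis vector -/
def e1 : E3 := EuclideanSpace.single 0 1

/-- the matrix Ω -/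
def Om (ϱ : ℝ) : Matrix (Fin 3) (Fin 3) ℝ := !![0,0,0; 0,0,-ϱ; 0,ϱ,0]

/-- matrix-vector product as a map on `E3` -/
def mvec (M : Matrix (Fin 3) (Fin 3) ℝ) (y : E3) : E3 :=
  WithLp.toLp 2 (M.mulVec (fun i => y i) : Fin 3 → ℝ)

/-- partial derivative in direction `i` -/
def pd (i : Fin 3) (f : E3 → ℝ) : E3 → ℝ :=
  fun x => fderiv ℝ f x (EuclideanSpace.single i 1)

/-- iterated partial derivative corresponding to a multi-index `α` -/
def mpd (α : Fin 3 → ℕ) (f : E3 → ℝ) : E3 → ℝ :=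
  (pd 0)^[α 0] ((pd 1)^[α 1] ((pd 2)^[α 2] f))

/-- heat kernel -/
def Kheat (x : E3) (t : ℝ) : ℝ := (4*π*t)^(-(3:ℝ)/2) * Real.exp (-‖x‖^2/(4*t))

/-- Newtonian potential -/
def Npot (x : E3) : ℝ := (4*π*‖x‖)⁻¹

/-- velocity part of fundamental solution of the time-dependent Stokes system -/
def Tfun (j k : Fin 3) (x : E3) (t : ℝ) : ℝ :=
  (if j = k then Kheat x t else 0)
    + pd j (pd k (fun z => ∫ y : E3, Npot (z - y) * Kheat y t)) x

/-- the function Γ -/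
def Gam (τ ϱ : ℝ) (j k : Fin 3) (x y : E3) (t : ℝ) : ℝ :=
  ∑ m : Fin 3, Tfun j m (x - (τ*t) • e1 - mvec (NormedSpace.exp ((-t) • Om ϱ)) y) t
      * (NormedSpace.exp ((-t) • Om ϱ)) m k

/-- the function Z -/
def Zfun (τ ϱ : ℝ) (j k : Fin 3) (x y : E3) : ℝ :=
  ∫ t in Set.Ioi (0:ℝ), Gam τ ϱ j k x y t

/-- ψ -/
def psi (r : ℝ) : ℝ := ∫ t in (0:ℝ)..r, (1 - Real.exp (-t)) / t

/-- Φ -/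
def Phi (τ : ℝ) (x : E3) : ℝ := (4*π*τ)⁻¹ * psi (τ * (‖x‖ - x 0) / 2)

/-- velocity part of the fundamental solution of the Oseen system -/
def Efun (τ : ℝ) (j k : Fin 3) (x : E3) : ℝ :=
  (if j = k then ∑ i : Fin 3, pd i (pd i (Phi τ)) x else 0) - pd j (pd k (Phi τ)) x

/-- fundamental solution of the scalar Oseen equation -/
def Ofun (τ : ℝ) (x : E3) : ℝ := (4*π*‖x‖)⁻¹ * Real.exp (-τ * (‖x‖ - x 0) / 2)

/-- fundamental solution of the scalar Oseen resolvent equation -/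
def Olam (τ lam : ℝ) (x : E3) : ℝ :=
  (4*π*‖x‖)⁻¹ * Real.exp (-Real.sqrt (lam + τ^2/4) * ‖x‖ + τ * x 0 / 2)

/-- Fourier transform with the convention of the paper -/
def ft (φ : E3 → ℂ) (ξ : E3) : ℂ :=
  ((2*π : ℝ)^(-(3:ℝ)/2) : ℝ) * ∫ x : E3, Complex.exp (-Complex.I * (inner ℝ ξ x : ℝ)) * φ x

theorem stmt0 :
    ∃ C > (0:ℝ), ∀ x y : E3,
      (sfun (x - y))⁻¹ ≤ C * (1 + ‖y‖) * (sfun x)⁻¹ ∧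
      sfun x ≤ C * (1 + ‖y‖) * sfun (x - y) := by
  have habs : ∀ z : E3, |z 0| ≤ ‖z‖ := by
    intro z
    have h := abs_real_inner_le_norm (EuclideanSpace.single (0 : Fin 3) (1 : ℝ)) z
    simpa [EuclideanSpace.inner_single_left] using h
  have hone : ∀ z : E3, 1 ≤ sfun z := by
    intro z
    have := habs z
    have h0 : z 0 ≤ ‖z‖ := (le_abs_self _).trans this
    simp only [sfun]; linarith
  have hkey : ∀ x y : E3, sfun x ≤ 2 * (1 + ‖y‖) * sfun (x - y) := by
    intro x y
    have htri : ‖x‖ ≤ ‖x - y‖ + ‖y‖ := by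
      simpa using norm_sub_le (x - y) (-y)
    have hsub : (x - y) 0 = x 0 - y 0 := rfl
    have hy0 : |y 0| ≤ ‖y‖ := habs y
    have h1 : 1 ≤ sfun (x - y) := hone (x - y)
    have hny : 0 ≤ ‖y‖ := norm_nonneg y
    simp only [sfun, hsub] at *
    nlinarith [abs_le.mp hy0]
  refine ⟨2, by norm_num, fun x y => ?_⟩
  have h1 : 0 < sfun x := lt_of_lt_of_le one_pos (hone x)
  have h2 : 0 < sfun (x - y) := lt_of_lt_of_le one_pos (hone (x - y))
  refine ⟨?_, hkey x y⟩
  rw [inv_le_iff_one_le_mul₀ h2]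
  have := hkey x y
  have hpos : (0:ℝ) < 2 * (1 + ‖y‖) := by positivity
  calc (1:ℝ) = sfun x * (sfun x)⁻¹ := (mul_inv_cancel₀ h1.ne').symm
    _ ≤ (2 * (1 + ‖y‖) * sfun (x - y)) * (sfun x)⁻¹ := by gcongr
    _ = 2 * (1 + ‖y‖) * (sfun x)⁻¹ * sfun (x - y) := by ring

end
end

section
/- Let τ ∈ (0,∞). There exists a constant C > 0 (depending only on τ) such that for all x ∈ ℝ³ and t ∈ (0,∞): if |x| ≤ 1 then |x − τ t e₁|² + t ≥ C (|x|² + t), and if |x| > 1 then |x − τ t e₁|² + t ≥ C (|x| s(x) + t). -/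
open MeasureTheory Real
noncomputable section

lemma arith (τ r a t : ℝ) (hτ : 0 < τ) (ht : 0 < t) (har : |a| ≤ r) :
    (r ≤ 1 → min (1/16) (1/(2*τ+1)) * (r^2 + t) ≤ r^2 - 2*(τ*t)*a + (τ*t)^2 + t) ∧
    (1 < r → min (1/16) (1/(2*τ+1)) * (r * (1 + r - a) + t) ≤ r^2 - 2*(τ*t)*a + (τ*t)^2 + t) := by
  set C := min (1/16) (1/(2*τ+1)) with hC
  have hC1 : C ≤ 1/16 := min_le_left _ _
  have hC2 : C * (2*τ+1) ≤ 1 := by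
    have h := min_le_right (1/16) (1/(2*τ+1))
    have hpos : (0:ℝ) < 2*τ+1 := by linarith
    calc C * (2*τ+1) ≤ (1/(2*τ+1)) * (2*τ+1) := by nlinarith
      _ = 1 := by field_simp
  have hCpos : 0 < C := by
    apply lt_min; norm_num; positivity
  have ha1 : a ≤ r := (abs_le.mp har).2
  have ha2 : -r ≤ a := (abs_le.mp har).1
  constructor
  · intro hr1
    rcases le_or_gt (τ*t) (r/2) with h | h
    · nlinarith [sq_nonneg (r - τ*t), mul_nonneg (mul_pos hτ ht).le (by linarith : 0 ≤ r - a)]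
    · nlinarith [sq_nonneg (r - τ*t), mul_nonneg (mul_pos hτ ht).le (by linarith : 0 ≤ r - a),
        mul_pos hCpos ht, mul_pos hτ ht]
  · intro hr1
    rcases le_or_gt (τ*t) (r/2) with h | h
    · have h4 : r * (1 + r - a) ≤ 4 * r^2 := by nlinarith
      have h0 : 0 ≤ r * (1 + r - a) := by nlinarith
      have h5 : C * (r * (1 + r - a)) ≤ (1/16) * (4 * r^2) :=
        mul_le_mul hC1 h4 h0 (by norm_num)
      have h6 : (1/4) * r^2 ≤ (r - τ*t)^2 := by nlinarith
      nlinarith [mul_nonneg (mul_pos hτ ht).le (by linarith : 0 ≤ r - a),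
        mul_pos hCpos ht]
    · have key1 : r * (r - a) ≤ 2*(τ*t)*(r-a) := by nlinarith
      nlinarith [sq_nonneg (r - τ*t), mul_nonneg (mul_pos hτ ht).le (by linarith : 0 ≤ r - a),
        mul_pos hCpos ht, mul_pos hτ ht]

lemma E3_expand (x : E3) (c : ℝ) : ‖x - c • e1‖^2 = ‖x‖^2 - 2*c*(x 0) + c^2 := by
  have h1 : (inner ℝ x (c • e1) : ℝ) = c * (x 0) := by
    rw [real_inner_smul_right]
    simp [e1, EuclideanSpace.inner_single_right]
  have h2 : ‖c • e1‖ = |c| := by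
    simp [e1, norm_smul, EuclideanSpace.norm_single]
  rw [norm_sub_sq_real x (c • e1), h1, h2, sq_abs]; ring

lemma E3_coord_le (x : E3) : |x 0| ≤ ‖x‖ := by
  have h1 : (inner ℝ x e1 : ℝ) = x 0 := by
    simp [e1, EuclideanSpace.inner_single_right]
  have := abs_real_inner_le_norm x e1
  rw [h1] at this
  simpa [e1, EuclideanSpace.norm_single] using this

theorem stmt1 (τ : ℝ) (hτ : 0 < τ) :
    ∃ C > (0:ℝ), ∀ (x : E3) (t : ℝ), 0 < t →
      (‖x‖ ≤ 1 → C * (‖x‖^2 + t) ≤ ‖x - (τ*t) • e1‖^2 + t) ∧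
      (1 < ‖x‖ → C * (‖x‖ * sfun x + t) ≤ ‖x - (τ*t) • e1‖^2 + t) := by
  refine ⟨min (1/16) (1/(2*τ+1)), by positivity, fun x t ht => ?_⟩
  have h := arith τ ‖x‖ (x 0) t hτ ht (E3_coord_le x)
  rw [E3_expand x (τ*t)] at *
  simpa [sfun] using h

end
end

section
/- Let R₁, R₂ ∈ (0,∞) with R₁ < R₂ and ν ∈ (1,∞). There exists a constant C > 0 (depending only on τ, ϱ, R₁, R₂, ν) such that for all y ∈ ℝ³ with |y| ≥ R₂ and all z ∈ ℝ³ with |z| < R₁, one has ∫₀^∞ ( |y − τ t e₁ − e^{−tΩ}·z|² + t )^{−ν} dt ≤ C ( |y| s(y) )^{−ν + 1/2}. -/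
open MeasureTheory Real
noncomputable section

-- ----------------------------------------------------------------------
-- Auxiliary lemmas
-- ----------------------------------------------------------------------
open scoped Matrix in
lemma Om_transpose' (ϱ : ℝ) : (Om ϱ)ᵀ = -(Om ϱ) := by
  ext i j
  fin_cases i <;> fin_cases j <;>
    simp [Om, Matrix.transpose_apply, Matrix.vecHead, Matrix.vecTail]

open scoped Matrix in
lemma exp_orth (ϱ t : ℝ) :
    (NormedSpace.exp ((-t) • Om ϱ))ᵀ * (NormedSpace.exp ((-t) • Om ϱ)) = 1 := by
  have h1 : (NormedSpace.exp ((-t) • Om ϱ))ᵀ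
      = NormedSpace.exp (-((-t) • Om ϱ)) := by
    rw [← Matrix.exp_transpose]
    congr 1
    rw [Matrix.transpose_smul, Om_transpose']
    simp
  have h2 := Matrix.exp_add_of_commute (-((-t) • Om ϱ)) ((-t) • Om ϱ)
    (Commute.neg_left rfl)
  rw [neg_add_cancel] at h2
  rw [h1, ← h2, NormedSpace.exp_zero]

open scoped Matrix in
lemma mvec_norm (ϱ t : ℝ) (z : E3) :
    ‖mvec (NormedSpace.exp ((-t) • Om ϱ)) z‖ = ‖z‖ := by
  set M := NormedSpace.exp ((-t) • Om ϱ) with hM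
  have horth : Mᵀ * M = 1 := exp_orth ϱ t
  have key : ∀ v : Fin 3 → ℝ, (M.mulVec v) ⬝ᵥ (M.mulVec v) = v ⬝ᵥ v := by
    intro v
    calc (M.mulVec v) ⬝ᵥ (M.mulVec v)
        = Matrix.vecMul (M.mulVec v) M ⬝ᵥ v := by rw [← Matrix.dotProduct_mulVec]
      _ = (Mᵀ.mulVec (M.mulVec v)) ⬝ᵥ v := by rw [Matrix.mulVec_transpose]
      _ = ((Mᵀ * M).mulVec v) ⬝ᵥ v := by rw [Matrix.mulVec_mulVec]
      _ = v ⬝ᵥ v := by rw [horth, Matrix.one_mulVec]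
  have h3 := key (fun i => z i)
  rw [EuclideanSpace.norm_eq, EuclideanSpace.norm_eq]
  congr 1
  simpa [dotProduct, mvec, pow_two, Real.norm_eq_abs, abs_mul_abs_self,
    mul_comm] using h3

lemma norm_e3 (v : E3) : ‖v‖ = Real.sqrt ((v 0)^2 + ((v 1)^2 + (v 2)^2)) := by
  rw [EuclideanSpace.norm_eq, Fin.sum_univ_three]
  congr 1
  simp [Real.norm_eq_abs, sq_abs]
  ring

lemma norm_sub_smul_e1 (y : E3) (c : ℝ) :
    ‖y - c • e1‖ = Real.sqrt ((y 0 - c)^2 + ((y 1)^2 + (y 2)^2)) := by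
  rw [norm_e3]
  congr 2
  · simp [e1, EuclideanSpace.single_apply]
  · congr 2 <;> simp [e1, EuclideanSpace.single_apply]

set_option maxHeartbeats 1000000 in
lemma auxD (τ R₂ c₂ : ℝ) (hτ : 0 < τ) (hR₂0 : 0 < R₂) (hc₂0 : 0 < c₂) (hc₂ : c₂ * R₂ = 1)
    (a ρ2 r t B : ℝ) (hρ2 : 0 ≤ ρ2) (ht : 0 ≤ t) (hr2 : a^2 + ρ2 = r^2) (hrR : R₂ ≤ r)
    (hB0 : 0 ≤ B) (hB2 : B^2 = (a - τ*t)^2 + ρ2) :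
    r * (1 + r - a) ≤ ((c₂+2) + ((64/9)*c₂+1)) * B^2 + 8*τ/3 * t := by
  have hr0 : 0 < r := lt_of_lt_of_le hR₂0 hrR
  have ha : a ≤ r := by nlinarith [sq_nonneg (a - r), sq_nonneg (a + r)]
  have han : -r ≤ a := by nlinarith [sq_nonneg (a - r), sq_nonneg (a + r)]
  have hc₂r : c₂ * (R₂ * r) = r := by rw [← mul_assoc, hc₂, one_mul]
  have hcr : r ≤ c₂ * r^2 := by
    nlinarith [mul_le_mul_of_nonneg_left (mul_le_mul_of_nonneg_right hrR hr0.le) hc₂0.le]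
  have hB2n : 0 ≤ B^2 := sq_nonneg B
  rcases le_or_gt a 0 with h | h
  · have hB2r : r^2 ≤ B^2 := by
      nlinarith [mul_nonneg (neg_nonneg.2 h) (mul_nonneg hτ.le ht)]
    have key : r * (1 + r - a) ≤ (c₂+2) * B^2 := by
      nlinarith [hcr, mul_nonneg (by linarith : (0:ℝ) ≤ r + a) hr0.le,
        mul_le_mul_of_nonneg_left hB2r (by positivity : (0:ℝ) ≤ c₂+2)]
    nlinarith [key, mul_nonneg (by positivity : (0:ℝ) ≤ (64/9)*c₂+1) hB2n,
      mul_nonneg (by positivity : (0:ℝ) ≤ 8*τ/3) ht]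
  · have hρB : ρ2 ≤ B^2 := by nlinarith [sq_nonneg (a - τ*t)]
    have hra : r*(r-a) ≤ ρ2 := by nlinarith [mul_nonneg h.le (sub_nonneg.2 ha)]
    have hrP : r ≤ (64/9)*c₂ * B^2 + 8*τ/3 * t := by
      rcases le_or_gt (r^2) (4*ρ2) with h4 | h4
      · have h5 : r ≤ 4*c₂ * ρ2 := by
          nlinarith [hc₂r, mul_nonneg hc₂0.le
            (by nlinarith [mul_le_mul_of_nonneg_right hrR hr0.le] : (0:ℝ) ≤ 4*ρ2 - R₂*r)]
        linarith [h5, mul_nonneg (by positivity : (0:ℝ) ≤ (28/9)*c₂) (hρ2.trans hρB),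
          mul_nonneg (by positivity : (0:ℝ) ≤ 8*τ/3) ht,
          mul_le_mul_of_nonneg_left hρB (by positivity : (0:ℝ) ≤ 4*c₂)]
      · have ha34 : 3/4 * r ≤ a := by
          nlinarith [sq_nonneg (2*a - (3/2)*r)]
        rcases le_or_gt (τ*t) (a/2) with h5 | h5
        · have hBat : a - τ*t ≤ B := by
            nlinarith [sq_nonneg (B + (a - τ*t))]
          have hBa : 3/8 * r ≤ B := by linarith
          have h6 : r ≤ (64/9)*c₂ * B^2 := by
            have hBsq : (3/8*r)^2 ≤ B^2 := by nlinarith [hBa, hB0]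
            have hrr : R₂ * r ≤ r^2 := by nlinarith [mul_le_mul_of_nonneg_right hrR hr0.le]
            nlinarith [hc₂r, mul_nonneg hc₂0.le
              (by nlinarith [hBsq, hrr] : (0:ℝ) ≤ B^2 - (9/64)*(R₂*r))]
          linarith [h6, mul_nonneg (by positivity : (0:ℝ) ≤ 8*τ/3) ht]
        · have h6 : r ≤ 8*τ/3 * t := by nlinarith [ha34, h5]
          linarith [h6, mul_nonneg (mul_nonneg (by positivity : (0:ℝ) ≤ (64/9)) hc₂0.le) hB2n]
    linarith [hrP, hra, hρB,
      mul_le_mul_of_nonneg_left hρB (by positivity : (0:ℝ) ≤ c₂+2),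
      mul_nonneg (by positivity : (0:ℝ) ≤ (64/9)*c₂) hB2n]

set_option maxHeartbeats 1000000 in
lemma key_pointwise (τ R₁ R₂ : ℝ) (hτ : 0 < τ) (hR₁ : 0 < R₁) (hR : R₁ < R₂) :
    ∃ K > (0:ℝ), ∀ a ρ2 r N t : ℝ, 0 ≤ ρ2 → 0 ≤ t → 0 ≤ N → a^2 + ρ2 = r^2 →
      R₂ ≤ r → Real.sqrt ((a - τ*t)^2 + ρ2) ≤ N + R₁ →
      r * (1 + r - a) + (t - max a 0 / τ)^2 ≤ K * (N^2 + t) := by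
  have hR₂0 : (0:ℝ) < R₂ := hR₁.trans hR
  obtain ⟨δ, hδ, hδ1, hδ2⟩ : ∃ δ, 0 < δ ∧ δ ≤ ((R₂-R₁)/2)^2 ∧ δ ≤ (R₂-R₁)/(2*τ) :=
    ⟨min (((R₂-R₁)/2)^2) ((R₂-R₁)/(2*τ)),
      lt_min (pow_pos (by linarith) 2) (div_pos (by linarith) (by positivity)),
      min_le_left _ _, min_le_right _ _⟩
  obtain ⟨c₁, hc₁0, hc₁⟩ : ∃ c, 0 ≤ c ∧ c * δ = 2*R₁^2 :=
    ⟨2*R₁^2/δ, by positivity, div_mul_cancel₀ _ hδ.ne'⟩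
  obtain ⟨KB, hKB, hKBdef⟩ : ∃ k, 0 < k ∧ k = 2 + c₁ := ⟨2+c₁, by positivity, rfl⟩
  obtain ⟨KQ, hKQ0, hKQ⟩ : ∃ c, 0 < c ∧ c * τ^2 = KB :=
    ⟨KB/τ^2, by positivity, div_mul_cancel₀ _ (by positivity)⟩
  obtain ⟨c₂, hc₂0, hc₂⟩ : ∃ c, 0 < c ∧ c * R₂ = 1 :=
    ⟨1/R₂, by positivity, by field_simp⟩
  refine ⟨KQ + ((c₂+2) + ((64/9)*c₂+1))*KB + 8*τ/3, by positivity, ?_⟩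
  intro a ρ2 r N t hρ2 ht hN hr2 hrR hBN
  obtain ⟨B, hB0, hB2, hBN⟩ : ∃ B, 0 ≤ B ∧ B^2 = (a - τ*t)^2 + ρ2 ∧ B ≤ N + R₁ :=
    ⟨_, Real.sqrt_nonneg _, Real.sq_sqrt (by positivity), hBN⟩
  have hr0 : 0 < r := lt_of_lt_of_le hR₂0 hrR
  have ha : a ≤ r := by nlinarith [sq_nonneg (a - r), sq_nonneg (a + r)]
  have hBr : r - τ*t ≤ B := by
    nlinarith [hB2, hB0, hr2, mul_nonneg (mul_nonneg hτ.le ht) (sub_nonneg.2 ha),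
      sq_nonneg (B + (r - τ*t))]
  have hP0 : (0:ℝ) ≤ N^2 + t := by positivity
  have hδP : δ ≤ N^2 + t := by
    rcases le_or_gt ((R₂-R₁)/(2*τ)) t with h | h
    · linarith [sq_nonneg N]
    · rw [lt_div_iff₀ (by positivity : (0:ℝ) < 2*τ)] at h
      have hNlow : (R₂-R₁)/2 ≤ N := by linarith
      have hsq : ((R₂-R₁)/2)^2 ≤ N^2 := pow_le_pow_left₀ (by linarith) hNlow 2
      linarith
  have hBP : B^2 ≤ KB * (N^2 + t) := by
    have h2 : c₁ * δ ≤ c₁ * (N^2+t) := mul_le_mul_of_nonneg_left hδP hc₁0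
    nlinarith [sq_nonneg (N - R₁), hBN, hB0]
  have hQ : (t - max a 0 / τ)^2 * τ^2 ≤ B^2 := by
    rcases le_or_gt a 0 with h | h
    · rw [max_eq_right h]
      have h1 : (t - 0/τ)^2 * τ^2 = (τ*t)^2 := by field_simp; ring
      rw [h1]
      nlinarith [hB2, hρ2, mul_nonneg (neg_nonneg.2 h) (mul_nonneg hτ.le ht)]
    · rw [max_eq_left h.le]
      have h1 : (t - a/τ)^2 * τ^2 = (a - τ*t)^2 := by field_simp; ring
      rw [h1]; linarith [hB2, hρ2]
  have hQ' : (t - max a 0 / τ)^2 ≤ KQ * (N^2 + t) := by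
    have h2 : (t - max a 0 / τ)^2 * τ^2 ≤ (KQ * (N^2+t)) * τ^2 := by
      calc (t - max a 0 / τ)^2 * τ^2 ≤ B^2 := hQ
        _ ≤ KB * (N^2+t) := hBP
        _ = (KQ * (N^2+t)) * τ^2 := by rw [← hKQ]; ring
    exact le_of_mul_le_mul_right h2 (by positivity)
  have hD := auxD τ R₂ c₂ hτ hR₂0 hc₂0 hc₂ a ρ2 r t B hρ2 ht hr2 hrR hB0 hB2
  have hD2 : ((c₂+2) + ((64/9)*c₂+1)) * B^2 ≤ ((c₂+2) + ((64/9)*c₂+1)) * (KB * (N^2+t)) :=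
    mul_le_mul_of_nonneg_left hBP (by positivity)
  have ht2 : 8*τ/3 * t ≤ 8*τ/3 * (N^2+t) :=
    mul_le_mul_of_nonneg_left (by nlinarith [sq_nonneg N] : t ≤ N^2+t) (by positivity)
  linarith [hQ', hD, hD2, ht2]

lemma integrable_base (ν : ℝ) (hν : 1 < ν) :
    Integrable (fun v : ℝ => (1 + v^2) ^ (-ν)) := by
  apply Integrable.mono integrable_inv_one_add_sq
  · exact (Continuous.rpow_const (by continuity)
      (fun x => Or.inl (by positivity))).aestronglyMeasurable
  · filter_upwards with v
    rw [Real.norm_eq_abs, Real.norm_eq_abs, abs_of_nonneg (by positivity),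
      abs_of_nonneg (by positivity)]
    have h1 : (1:ℝ) ≤ 1 + v^2 := by nlinarith [sq_nonneg v]
    calc (1 + v^2) ^ (-ν) ≤ (1 + v^2) ^ (-1 : ℝ) :=
          Real.rpow_le_rpow_of_exponent_le h1 (by linarith)
      _ = (1 + v^2)⁻¹ := by rw [Real.rpow_neg_one]

lemma integrable_shifted (ν D t₀ : ℝ) (hν : 1 < ν) (hD : 0 < D) :
    Integrable (fun t : ℝ => (D + (t - t₀)^2) ^ (-ν)) := by
  have hs : 0 < Real.sqrt D := Real.sqrt_pos.2 hD
  have hrew : ∀ u : ℝ, (D + u^2) ^ (-ν)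
      = D ^ (-ν) * (1 + ((Real.sqrt D)⁻¹ * u)^2) ^ (-ν) := by
    intro u
    rw [← Real.mul_rpow hD.le (by positivity)]
    congr 1
    have : Real.sqrt D ^ 2 = D := Real.sq_sqrt hD.le
    field_simp
    rw [this]; ring
  have h1 : Integrable (fun u : ℝ => (D + u^2) ^ (-ν)) := by
    simp_rw [hrew]
    exact ((integrable_base ν hν).comp_mul_left'
      (by positivity : (Real.sqrt D)⁻¹ ≠ 0)).const_mul _
  exact h1.comp_sub_right t₀

lemma integral_shifted (ν D t₀ : ℝ) (hν : 1 < ν) (hD : 0 < D) :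
    (∫ t : ℝ, (D + (t - t₀)^2) ^ (-ν))
      = D ^ (-ν + 1/2) * ∫ v : ℝ, (1 + v^2) ^ (-ν) := by
  have hs : 0 < Real.sqrt D := Real.sqrt_pos.2 hD
  have hrew : ∀ u : ℝ, (D + u^2) ^ (-ν)
      = D ^ (-ν) * (1 + ((Real.sqrt D)⁻¹ * u)^2) ^ (-ν) := by
    intro u
    rw [← Real.mul_rpow hD.le (by positivity)]
    congr 1
    have : Real.sqrt D ^ 2 = D := Real.sq_sqrt hD.le
    field_simp
    rw [this]; ring
  calc (∫ t : ℝ, (D + (t - t₀)^2) ^ (-ν))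
      = ∫ u : ℝ, (D + u^2) ^ (-ν) :=
        integral_sub_right_eq_self (fun u : ℝ => (D + u^2) ^ (-ν)) t₀
    _ = ∫ u : ℝ, D ^ (-ν) * (1 + ((Real.sqrt D)⁻¹ * u)^2) ^ (-ν) := by simp_rw [hrew]
    _ = D ^ (-ν) * ∫ u : ℝ, (1 + ((Real.sqrt D)⁻¹ * u)^2) ^ (-ν) := by
        rw [integral_const_mul]
    _ = D ^ (-ν) * (|((Real.sqrt D)⁻¹)⁻¹| • ∫ v : ℝ, (1 + v^2) ^ (-ν)) := by
        rw [MeasureTheory.Measure.integral_comp_mul_left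
          (fun v : ℝ => (1 + v^2) ^ (-ν)) (Real.sqrt D)⁻¹]
    _ = D ^ (-ν + 1/2) * ∫ v : ℝ, (1 + v^2) ^ (-ν) := by
        rw [inv_inv, abs_of_pos hs, smul_eq_mul, ← mul_assoc]
        congr 1
        rw [Real.rpow_add hD, ← Real.sqrt_eq_rpow]

set_option maxHeartbeats 1000000 in

theorem stmt2 (τ ϱ R₁ R₂ ν : ℝ) (hτ : 0 < τ) (hϱ : ϱ ≠ 0) (hR₁ : 0 < R₁)
    (hR : R₁ < R₂) (hν : 1 < ν) :
    ∃ C > (0:ℝ), ∀ (y z : E3), R₂ ≤ ‖y‖ → ‖z‖ < R₁ →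
      (∫ t in Set.Ioi (0:ℝ),
          (‖y - (τ*t) • e1 - mvec (NormedSpace.exp ((-t) • Om ϱ)) z‖^2 + t) ^ (-ν))
        ≤ C * (‖y‖ * sfun y) ^ (-ν + 1/2) := by
  obtain ⟨K, hK, hkey⟩ := key_pointwise τ R₁ R₂ hτ hR₁ hR
  set Iν : ℝ := ∫ v : ℝ, (1 + v^2) ^ (-ν) with hIνdef
  have hIν : 0 < Iν := by
    rw [hIνdef]
    apply (integral_pos_iff_support_of_nonneg ?_ (integrable_base ν hν)).2
    · have : Function.support (fun v : ℝ => (1 + v^2) ^ (-ν)) = Set.univ := by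
        ext v
        simp only [Function.mem_support, Set.mem_univ, iff_true]
        positivity
      rw [this]
      simp [volume_univ]
    · intro v
      positivity
  refine ⟨K ^ ν * Iν, by positivity, ?_⟩
  intro y z hy hz
  set D : ℝ := ‖y‖ * sfun y with hDdef
  have hyn : 0 < ‖y‖ := lt_of_lt_of_le (hR₁.trans hR) hy
  have hr2 : (y 0)^2 + ((y 1)^2 + (y 2)^2) = ‖y‖^2 := by
    rw [norm_e3, Real.sq_sqrt (by positivity)]
  have hay : y 0 ≤ ‖y‖ := by nlinarith [sq_nonneg (y 1), sq_nonneg (y 2), hyn]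
  have hD : 0 < D := by
    rw [hDdef]
    unfold sfun
    have : (1:ℝ) ≤ 1 + ‖y‖ - y 0 := by linarith
    nlinarith
  have hDeq : D = ‖y‖ * (1 + ‖y‖ - y 0) := by rw [hDdef]; rfl
  set t₀ : ℝ := max (y 0) 0 / τ with ht₀def
  have hpt : ∀ t ∈ Set.Ioi (0:ℝ),
      (‖y - (τ*t) • e1 - mvec (NormedSpace.exp ((-t) • Om ϱ)) z‖^2 + t) ^ (-ν)
        ≤ K ^ ν * (D + (t - t₀)^2) ^ (-ν) := by
    intro t ht
    have ht0 : 0 < t := ht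
    set w : E3 := mvec (NormedSpace.exp ((-t) • Om ϱ)) z with hwdef
    set N : ℝ := ‖y - (τ*t) • e1 - w‖ with hNdef
    have hB : Real.sqrt ((y 0 - τ*t)^2 + ((y 1)^2 + (y 2)^2)) ≤ N + R₁ := by
      rw [← norm_sub_smul_e1]
      have h1 : ‖y - (τ*t) • e1‖ - ‖w‖ ≤ ‖y - (τ*t) • e1 - w‖ := norm_sub_norm_le _ _
      have h2 : ‖w‖ = ‖z‖ := mvec_norm ϱ t z
      rw [hNdef]
      linarith [hz, h1, h2.le]
    have hkk := hkey (y 0) ((y 1)^2 + (y 2)^2) ‖y‖ N t (by positivity) ht0.le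
      (norm_nonneg _) hr2 hy hB
    have hX : 0 < D + (t - t₀)^2 := by positivity
    have hNt : 0 < N^2 + t := by positivity
    have hle : K⁻¹ * (D + (t - t₀)^2) ≤ N^2 + t := by
      rw [inv_mul_le_iff₀ hK]
      calc D + (t - t₀)^2 = ‖y‖ * (1 + ‖y‖ - y 0) + (t - max (y 0) 0 / τ)^2 := by
            rw [hDeq, ht₀def]
        _ ≤ K * (N^2 + t) := hkk
    calc (N^2 + t) ^ (-ν) ≤ (K⁻¹ * (D + (t - t₀)^2)) ^ (-ν) :=
          Real.rpow_le_rpow_of_nonpos (by positivity) hle (by linarith)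
      _ = K ^ ν * (D + (t - t₀)^2) ^ (-ν) := by
          rw [Real.mul_rpow (by positivity) hX.le, Real.inv_rpow hK.le,
            Real.rpow_neg hK.le, inv_inv]
  have hg_int : Integrable (fun t : ℝ => K ^ ν * (D + (t - t₀)^2) ^ (-ν)) :=
    (integrable_shifted ν D t₀ hν hD).const_mul _
  have h1 : (∫ t in Set.Ioi (0:ℝ),
        (‖y - (τ*t) • e1 - mvec (NormedSpace.exp ((-t) • Om ϱ)) z‖^2 + t) ^ (-ν))
      ≤ ∫ t in Set.Ioi (0:ℝ), K ^ ν * (D + (t - t₀)^2) ^ (-ν) := by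
    apply integral_mono_of_nonneg
    · filter_upwards [ae_restrict_mem measurableSet_Ioi] with t ht
      have ht0 : (0:ℝ) < t := ht
      have : (0:ℝ) ≤ ‖y - (τ*t) • e1 - mvec (NormedSpace.exp ((-t) • Om ϱ)) z‖^2 + t := by
        positivity
      exact Real.rpow_nonneg this _
    · exact hg_int.integrableOn
    · filter_upwards [ae_restrict_mem measurableSet_Ioi] with t ht using hpt t ht
  have h2 : (∫ t in Set.Ioi (0:ℝ), K ^ ν * (D + (t - t₀)^2) ^ (-ν))
      ≤ ∫ t : ℝ, K ^ ν * (D + (t - t₀)^2) ^ (-ν) := by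
    apply setIntegral_le_integral hg_int
    filter_upwards with t
    have : (0:ℝ) ≤ (D + (t - t₀)^2) ^ (-ν) := Real.rpow_nonneg (by positivity) _
    positivity
  have h3 : (∫ t : ℝ, K ^ ν * (D + (t - t₀)^2) ^ (-ν)) = K ^ ν * Iν * D ^ (-ν + 1/2) := by
    rw [integral_const_mul, integral_shifted ν D t₀ hν hD]
    ring
  calc (∫ t in Set.Ioi (0:ℝ),
        (‖y - (τ*t) • e1 - mvec (NormedSpace.exp ((-t) • Om ϱ)) z‖^2 + t) ^ (-ν))
      ≤ ∫ t : ℝ, K ^ ν * (D + (t - t₀)^2) ^ (-ν) := h1.trans h2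
    _ = K ^ ν * Iν * D ^ (-ν + 1/2) := h3


end
end

section
/- Let R ∈ (0,∞) and k ∈ {0,1}. There exists a constant C > 0 (depending only on τ, ϱ, R) such that for all x, y ∈ ℝ³ with |x| < R, |y| < R and x ≠ y, one has ∫₀^∞ ( |x − τ t e₁ − e^{−tΩ}·y|² + t )^{−3/2 − k/2} dt ≤ C |x − y|^{−1−k}. -/
open MeasureTheory Real
noncomputable section

lemma mvec_toCLM (M : Matrix (Fin 3) (Fin 3) ℝ) (y : E3) :
    mvec M y = Matrix.toEuclideanCLM (𝕜 := ℝ) M y := rfl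

lemma toCLM_exp (M : Matrix (Fin 3) (Fin 3) ℝ) :
    Matrix.toEuclideanCLM (𝕜 := ℝ) (NormedSpace.exp M)
      = NormedSpace.exp (Matrix.toEuclideanCLM (𝕜 := ℝ) M) := by
  letI : SeminormedRing (Matrix (Fin 3) (Fin 3) ℝ) := Matrix.linftyOpSemiNormedRing
  letI : NormedRing (Matrix (Fin 3) (Fin 3) ℝ) := Matrix.linftyOpNormedRing
  letI : NormedAlgebra ℝ (Matrix (Fin 3) (Fin 3) ℝ) := Matrix.linftyOpNormedAlgebra
  letI : NormedAlgebra ℚ (Matrix (Fin 3) (Fin 3) ℝ) := NormedAlgebra.restrictScalars ℚ ℝ _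
  have hlin : IsLinearMap ℝ (⇑(Matrix.toEuclideanCLM (𝕜 := ℝ) (n := Fin 3))) :=
    ⟨map_add _, map_smul _⟩
  have hcont : Continuous (⇑(Matrix.toEuclideanCLM (𝕜 := ℝ) (n := Fin 3))) :=
    LinearMap.continuous_of_finiteDimensional (hlin.mk' _)
  exact NormedSpace.map_exp (Matrix.toEuclideanCLM (𝕜 := ℝ) (n := Fin 3)) hcont M

lemma aux_exp_bound (A : E3 →L[ℝ] E3) :
    ∃ L ≥ (0:ℝ), ∀ t ∈ Set.Icc (0:ℝ) 1, ‖NormedSpace.exp (t • A) - 1‖ ≤ L * t := by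
  have hderiv : ∀ u : ℝ, HasDerivAt (fun u : ℝ => NormedSpace.exp (u • A))
      (NormedSpace.exp (u • A) * A) u := fun u => hasDerivAt_exp_smul_const A u
  have hcont : ContinuousOn (fun u : ℝ => NormedSpace.exp (u • A)) (Set.Icc 0 1) :=
    fun u _ => ((hderiv u).continuousAt).continuousWithinAt
  obtain ⟨M, hM⟩ := (isCompact_Icc (a := (0:ℝ)) (b := 1)).exists_bound_of_continuousOn hcont
  have hM0 : 0 ≤ M :=
    le_trans (norm_nonneg _) (hM 0 ⟨le_refl _, zero_le_one⟩)
  refine ⟨M * ‖A‖, mul_nonneg hM0 (norm_nonneg _), fun t ht => ?_⟩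
  have := Convex.norm_image_sub_le_of_norm_hasDerivWithin_le
    (f := fun u : ℝ => NormedSpace.exp (u • A))
    (f' := fun u => NormedSpace.exp (u • A) * A) (s := Set.Icc 0 1)
    (fun u hu => (hderiv u).hasDerivWithinAt)
    (fun u hu => le_trans (norm_mul_le _ _)
      (mul_le_mul_of_nonneg_right (hM u hu) (norm_nonneg A)))
    (convex_Icc 0 1) (Set.left_mem_Icc.2 zero_le_one) ht
  rw [show ((0:ℝ) • A : E3 →L[ℝ] E3) = 0 from zero_smul ℝ A, NormedSpace.exp_zero] at this
  simpa [Real.norm_eq_abs, abs_of_nonneg ht.1] using this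


set_option maxHeartbeats 1000000 in
set_option synthInstance.maxHeartbeats 1000000 in
theorem stmt3 (τ ϱ R : ℝ) (hτ : 0 < τ) (hϱ : ϱ ≠ 0) (hR : 0 < R)
    (k : ℕ) (hk : k = 0 ∨ k = 1) :
    ∃ C > (0:ℝ), ∀ (x y : E3), ‖x‖ < R → ‖y‖ < R → x ≠ y →
      (∫ t in Set.Ioi (0:ℝ),
          (‖x - (τ*t) • e1 - mvec (NormedSpace.exp ((-t) • Om ϱ)) y‖^2 + t)
            ^ (-(3:ℝ)/2 - (k:ℝ)/2))
        ≤ C * ‖x - y‖ ^ (-(1:ℝ) - (k:ℝ)) := by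
  classical
  set A0 : E3 →L[ℝ] E3 := Matrix.toEuclideanCLM (𝕜 := ℝ) (Om ϱ) with hA0
  obtain ⟨L, hL0, hL⟩ := aux_exp_bound (-A0)
  set K : ℝ := τ + L * R with hKdef
  have hK0 : 0 < K := by
    have h1 : 0 ≤ L * R := mul_nonneg hL0 hR.le
    simp only [hKdef]; linarith
  set ε : ℝ := min (1/(2*R)) (1/(2*(K+1))) with hεdef
  have hε0 : 0 < ε :=
    lt_min (one_div_pos.mpr (by linarith)) (one_div_pos.mpr (by linarith))
  set e : ℝ := -(3:ℝ)/2 - (k:ℝ)/2 with hedef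
  have hk0 : (0:ℝ) ≤ (k:ℝ) := Nat.cast_nonneg k
  have he1 : e < -1 := by simp only [hedef]; linarith
  set q : ℝ := (1 + (k:ℝ))/2 with hqdef
  have hq0 : 0 < q := by simp only [hqdef]; linarith
  have heq : e + 1 = -q := by simp only [hedef, hqdef]; ring
  set C : ℝ := ((2:ℝ)^((1:ℝ)+(k:ℝ)) + ε^(-q) * (2*R)^q) / q with hCdef
  have hC0 : 0 < C := by
    have h1 : (0:ℝ) < (2:ℝ)^((1:ℝ)+(k:ℝ)) := Real.rpow_pos_of_pos (by norm_num) _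
    have h2 : (0:ℝ) < ε^(-q) * (2*R)^q :=
      mul_pos (Real.rpow_pos_of_pos hε0 _) (Real.rpow_pos_of_pos (by linarith) _)
    exact div_pos (by linarith) hq0
  refine ⟨C, hC0, ?_⟩
  intro x y hx hy hxy
  set d : ℝ := ‖x - y‖ with hddef
  have hd0 : 0 < d := by rw [hddef]; exact norm_sub_pos_iff.mpr hxy
  have hd2R : d < 2*R := by
    have h1 := norm_sub_le x y
    rw [hddef]; linarith
  set T : ℝ := ε * d with hTdef
  have hT0 : 0 < T := mul_pos hε0 hd0
  have hεR : ε ≤ 1/(2*R) := min_le_left _ _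
  have hεK : ε ≤ 1/(2*(K+1)) := min_le_right _ _
  have hT1 : T ≤ 1 := by
    have h1 : T ≤ (1/(2*R)) * (2*R) :=
      mul_le_mul hεR hd2R.le hd0.le (le_of_lt (one_div_pos.mpr (by linarith)))
    rw [div_mul_cancel₀ _ (ne_of_gt (by linarith : (0:ℝ) < 2*R))] at h1
    exact h1
  -- pointwise lower bound on (0, T]
  have key : ∀ t ∈ Set.Ioc (0:ℝ) T,
      d/2 ≤ ‖x - (τ*t) • e1 - mvec (NormedSpace.exp ((-t) • Om ϱ)) y‖ := by
    intro t ht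
    have ht0 := ht.1
    have htT := ht.2
    have ht1 : t ≤ 1 := le_trans htT hT1
    have hm : mvec (NormedSpace.exp ((-t) • Om ϱ)) y
        = NormedSpace.exp (t • (-A0)) y := by
      rw [mvec_toCLM, toCLM_exp]
      have harg : Matrix.toEuclideanCLM (𝕜 := ℝ) ((-t) • Om ϱ) = t • (-A0) := by
        rw [_root_.map_smul, ← hA0]
        exact (neg_smul t A0).trans (smul_neg t A0).symm
      rw [harg]
    have hEb : ‖NormedSpace.exp (t • (-A0)) - 1‖ ≤ L * t := hL t ⟨ht0.le, ht1⟩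
    have hEy : ‖NormedSpace.exp (t • (-A0)) y - y‖ ≤ L * t * R := by
      have h1 : NormedSpace.exp (t • (-A0)) y - y
          = (NormedSpace.exp (t • (-A0)) - 1) y := by
        simp [ContinuousLinearMap.sub_apply]
      rw [h1]
      calc ‖(NormedSpace.exp (t • (-A0)) - 1) y‖
          ≤ ‖NormedSpace.exp (t • (-A0)) - 1‖ * ‖y‖ :=
            ContinuousLinearMap.le_opNorm _ _
        _ ≤ (L * t) * R := by
            apply mul_le_mul hEb hy.le (norm_nonneg y)
            have h2 : 0 ≤ L * t := mul_nonneg hL0 ht0.le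
            linarith
    have he1n : ‖(τ*t) • e1‖ = τ * t := by
      rw [norm_smul, Real.norm_eq_abs, abs_of_nonneg (mul_nonneg hτ.le ht0.le)]
      simp [e1, EuclideanSpace.norm_single]
    have hsmall : τ * t + L * t * R ≤ d / 2 := by
      have h2 : K * t ≤ K * (ε * d) := mul_le_mul_of_nonneg_left htT hK0.le
      have h4 : K * (1/(2*(K+1))) ≤ 1/2 := by
        rw [mul_one_div, div_le_div_iff₀ (by linarith) (by norm_num)]
        linarith
      have h3 : K * ε ≤ 1/2 :=
        le_trans (mul_le_mul_of_nonneg_left hεK hK0.le) h4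
      have h5 : K * ε * d ≤ (1/2) * d :=
        mul_le_mul_of_nonneg_right h3 hd0.le
      have h6 : τ * t + L * t * R = K * t := by rw [hKdef]; ring
      rw [h6]
      calc K * t ≤ K * (ε * d) := h2
        _ = K * ε * d := by ring
        _ ≤ (1/2) * d := h5
        _ = d/2 := by ring
    rw [hm]
    have hre : x - (τ*t) • e1 - NormedSpace.exp (t • (-A0)) y
        = (x - y) - ((τ*t) • e1 + (NormedSpace.exp (t • (-A0)) y - y)) := by
      abel
    rw [hre]
    have hnn : ‖(τ*t) • e1 + (NormedSpace.exp (t • (-A0)) y - y)‖ ≤ τ*t + L*t*R := by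
      calc ‖(τ*t) • e1 + (NormedSpace.exp (t • (-A0)) y - y)‖
          ≤ ‖(τ*t) • e1‖ + ‖NormedSpace.exp (t • (-A0)) y - y‖ := norm_add_le _ _
        _ ≤ τ*t + L*t*R := by rw [he1n]; linarith
    calc d/2 = d - d/2 := by ring
      _ ≤ ‖x - y‖ - ‖(τ*t) • e1 + (NormedSpace.exp (t • (-A0)) y - y)‖ := by
          rw [← hddef]; linarith
      _ ≤ ‖(x - y) - ((τ*t) • e1 + (NormedSpace.exp (t • (-A0)) y - y))‖ :=
          norm_sub_norm_le _ _
  -- the comparison function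
  set a : ℝ := (d/2)^2 with hadef
  have ha0 : 0 < a := by rw [hadef]; exact pow_pos (by linarith) 2
  set g : ℝ → ℝ := fun t => (a + t)^e + Set.indicator (Set.Ioi T) (fun t => t^e) t
    with hgdef
  have hint1 : IntegrableOn (fun t => (a + t)^e) (Set.Ioi (0:ℝ)) := by
    have h := integrableOn_Ioi_rpow_of_lt he1 ha0
    have hmp : MeasurePreserving (fun t : ℝ => a + t) volume volume :=
      measurePreserving_add_left volume a
    have h2 := (hmp.integrableOn_comp_preimage (measurableEmbedding_addLeft a)).mpr h
    have h3 : (fun t : ℝ => a + t) ⁻¹' Set.Ioi a = Set.Ioi 0 := by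
      rw [Set.preimage_const_add_Ioi, sub_self]
    rwa [h3] at h2
  have hval1 : (∫ t in Set.Ioi (0:ℝ), (a + t)^e) = a^(e+1)/q := by
    have hmp : MeasurePreserving (fun t : ℝ => a + t) volume volume :=
      measurePreserving_add_left volume a
    have h2 := hmp.setIntegral_preimage_emb (measurableEmbedding_addLeft a)
      (fun s => s^e) (Set.Ioi a)
    have h3 : (fun t : ℝ => a + t) ⁻¹' Set.Ioi a = Set.Ioi 0 := by
      rw [Set.preimage_const_add_Ioi, sub_self]
    calc (∫ t in Set.Ioi (0:ℝ), (a + t)^e) = ∫ s in Set.Ioi a, s^e := by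
          rw [← h3]; exact h2
      _ = -a^(e+1)/(e+1) := integral_Ioi_rpow_of_lt he1 ha0
      _ = a^(e+1)/q := by rw [heq, neg_div_neg_eq]
  have hint2 : Integrable (Set.indicator (Set.Ioi T) (fun t : ℝ => t^e)) volume :=
    (integrableOn_Ioi_rpow_of_lt he1 hT0).integrable_indicator measurableSet_Ioi
  have hval2 : (∫ t in Set.Ioi (0:ℝ), Set.indicator (Set.Ioi T) (fun t : ℝ => t^e) t)
      = T^(e+1)/q := by
    rw [MeasureTheory.integral_indicator measurableSet_Ioi,
      Measure.restrict_restrict measurableSet_Ioi]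
    have h3 : Set.Ioi T ∩ Set.Ioi (0:ℝ) = Set.Ioi T := by
      rw [Set.Ioi_inter_Ioi, sup_eq_left.mpr hT0.le]
    rw [h3, integral_Ioi_rpow_of_lt he1 hT0, heq, neg_div_neg_eq]
  have hgi : IntegrableOn g (Set.Ioi (0:ℝ)) := hint1.add hint2.integrableOn
  have hmono : (∫ t in Set.Ioi (0:ℝ),
      (‖x - (τ*t) • e1 - mvec (NormedSpace.exp ((-t) • Om ϱ)) y‖^2 + t) ^ e)
      ≤ ∫ t in Set.Ioi (0:ℝ), g t := by
    apply integral_mono_of_nonneg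
    · filter_upwards [ae_restrict_mem measurableSet_Ioi] with t ht
      have ht0 : (0:ℝ) < t := ht
      have hb : (0:ℝ) ≤ ‖x - (τ*t) • e1 - mvec (NormedSpace.exp ((-t) • Om ϱ)) y‖^2 := by
        positivity
      exact Real.rpow_nonneg (by linarith) _
    · exact hgi
    · filter_upwards [ae_restrict_mem measurableSet_Ioi] with t ht
      have ht0 : (0:ℝ) < t := ht
      have hb : (0:ℝ) ≤ ‖x - (τ*t) • e1 - mvec (NormedSpace.exp ((-t) • Om ϱ)) y‖^2 := by
        positivity
      by_cases hc : t ≤ T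
      · have h1 := key t ⟨ht0, hc⟩
        have h2 : a ≤ ‖x - (τ*t) • e1 - mvec (NormedSpace.exp ((-t) • Om ϱ)) y‖^2 := by
          rw [hadef]
          exact pow_le_pow_left₀ (by linarith) h1 2
        have h3 : (‖x - (τ*t) • e1 - mvec (NormedSpace.exp ((-t) • Om ϱ)) y‖^2 + t)^e
            ≤ (a + t)^e :=
          Real.rpow_le_rpow_of_nonpos (add_pos ha0 ht0) (by linarith) (by linarith)
        have h4 : (0:ℝ) ≤ Set.indicator (Set.Ioi T) (fun t : ℝ => t^e) t :=
          Set.indicator_nonneg (fun s hs => Real.rpow_nonneg (le_of_lt (lt_trans hT0 hs)) _) t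
        simp only [hgdef]
        linarith
      · push_neg at hc
        have h1 : (‖x - (τ*t) • e1 - mvec (NormedSpace.exp ((-t) • Om ϱ)) y‖^2 + t)^e
            ≤ t^e :=
          Real.rpow_le_rpow_of_nonpos ht0 (by linarith) (by linarith)
        have h2 : Set.indicator (Set.Ioi T) (fun t : ℝ => t^e) t = t^e :=
          Set.indicator_of_mem hc _
        have h3 : (0:ℝ) ≤ (a + t)^e :=
          Real.rpow_nonneg (by linarith) _
        simp only [hgdef]
        rw [h2]
        linarith
  have hgval : (∫ t in Set.Ioi (0:ℝ), g t) = a^(e+1)/q + T^(e+1)/q := by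
    simp only [hgdef]
    rw [MeasureTheory.integral_add hint1 hint2.integrableOn, hval1, hval2]
  have hfinal : a^(e+1)/q + T^(e+1)/q ≤ C * d ^ (-(1:ℝ) - (k:ℝ)) := by
    have hm2 : ((2:ℕ):ℝ) * (e+1) = -(1:ℝ) - (k:ℝ) := by
      push_cast; simp only [hedef]; ring
    have haval : a^(e+1) = d ^ (-(1:ℝ) - (k:ℝ)) * (2:ℝ)^((1:ℝ)+(k:ℝ)) := by
      rw [hadef, ← Real.rpow_natCast (d/2) 2,
        ← Real.rpow_mul (by linarith : (0:ℝ) ≤ d/2), hm2,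
        Real.div_rpow hd0.le (by norm_num : (0:ℝ) ≤ 2),
        show -(1:ℝ) - (k:ℝ) = -((1:ℝ)+(k:ℝ)) from by ring,
        Real.rpow_neg (by norm_num : (0:ℝ) ≤ 2), div_inv_eq_mul]
    have hTval : T^(e+1) ≤ ε^(-q) * (2*R)^q * d ^ (-(1:ℝ) - (k:ℝ)) := by
      rw [hTdef, Real.mul_rpow hε0.le hd0.le, heq]
      have hde : d^(-q) = d ^ (-(1:ℝ) - (k:ℝ)) * d^q := by
        rw [← Real.rpow_add hd0]
        congr 1
        simp only [hqdef]; ring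
      rw [hde]
      have hdq : d^q ≤ (2*R)^q := Real.rpow_le_rpow hd0.le hd2R.le hq0.le
      have h0 : (0:ℝ) ≤ ε^(-q) * d ^ (-(1:ℝ) - (k:ℝ)) :=
        mul_nonneg (Real.rpow_nonneg hε0.le _) (Real.rpow_nonneg hd0.le _)
      calc ε^(-q) * (d ^ (-(1:ℝ) - (k:ℝ)) * d^q)
          = (ε^(-q) * d ^ (-(1:ℝ) - (k:ℝ))) * d^q := by ring
        _ ≤ (ε^(-q) * d ^ (-(1:ℝ) - (k:ℝ))) * (2*R)^q :=
            mul_le_mul_of_nonneg_left hdq h0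
        _ = ε^(-q) * (2*R)^q * d ^ (-(1:ℝ) - (k:ℝ)) := by ring
    rw [hCdef, ← add_div, div_le_iff₀ hq0]
    calc a^(e+1) + T^(e+1)
        ≤ d ^ (-(1:ℝ) - (k:ℝ)) * (2:ℝ)^((1:ℝ)+(k:ℝ))
            + ε^(-q) * (2*R)^q * d ^ (-(1:ℝ) - (k:ℝ)) := by
          rw [haval]; linarith
      _ = ((2:ℝ)^((1:ℝ)+(k:ℝ)) + ε^(-q) * (2*R)^q) * d ^ (-(1:ℝ) - (k:ℝ)) := by ring
      _ = ((2:ℝ)^((1:ℝ)+(k:ℝ)) + ε^(-q) * (2*R)^q) / q * d ^ (-(1:ℝ) - (k:ℝ)) * q := by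
          rw [div_mul_eq_mul_div, div_mul_cancel₀ _ (ne_of_gt hq0)]
  calc (∫ t in Set.Ioi (0:ℝ),
        (‖x - (τ*t) • e1 - mvec (NormedSpace.exp ((-t) • Om ϱ)) y‖^2 + t) ^ e)
      ≤ ∫ t in Set.Ioi (0:ℝ), g t := hmono
    _ = a^(e+1)/q + T^(e+1)/q := hgval
    _ ≤ C * d ^ (-(1:ℝ) - (k:ℝ)) := hfinal


end
end

section
/- For every x ∈ ℝ³∖{0}, the partial derivative ∂_{x_1}Φ(x) exists and ∂_{x_1}Φ(x) = τ^{−1} ( 𝔒(x) − N(x) ), i.e. ∂_{x_1}Φ(x) = (4πτ|x|)^{−1} ( e^{−τ(|x| − x₁)/2} − 1 ). -/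
open MeasureTheory Real Topology
noncomputable section

def gfun : ℝ → ℝ := fun t => if t = 0 then 1 else (1 - Real.exp (-t)) / t

lemma gfun_cont : Continuous gfun := by
  rw [continuous_iff_continuousAt]
  intro a
  rcases eq_or_ne a 0 with rfl | ha
  · have hd : HasDerivAt (fun t : ℝ => 1 - Real.exp (-t)) 1 0 := by
      have := ((Real.hasDerivAt_exp (-0)).comp 0 (hasDerivAt_neg (0:ℝ))).const_sub 1
      simpa using this
    have h1 : Filter.Tendsto (slope (fun t : ℝ => 1 - Real.exp (-t)) 0) (𝓝[≠] 0) (𝓝 1) :=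
      hasDerivAt_iff_tendsto_slope.mp hd
    have h2 : Filter.Tendsto gfun (𝓝[≠] 0) (𝓝 1) := by
      refine h1.congr' ?_
      filter_upwards [self_mem_nhdsWithin] with t ht
      simp only [Set.mem_compl_iff, Set.mem_singleton_iff] at ht
      simp [gfun, ht, slope, div_eq_inv_mul]
    rw [ContinuousAt]
    have : gfun 0 = 1 := by simp [gfun]
    rw [this, ← nhdsNE_sup_pure 0, Filter.tendsto_sup]
    exact ⟨h2, by simpa [this] using tendsto_pure_nhds gfun 0⟩
  · have : ContinuousAt (fun t => (1 - Real.exp (-t)) / t) a := by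
      exact ((continuous_const.sub (Real.continuous_exp.comp continuous_neg)).continuousAt).div
        continuousAt_id ha
    refine this.congr ?_
    filter_upwards [isOpen_ne.mem_nhds ha] with t ht
    simp [gfun, ht]

lemma psi_eq (r : ℝ) : psi r = ∫ t in (0:ℝ)..r, gfun t := by
  apply intervalIntegral.integral_congr_ae
  have h0 : ∀ᵐ t : ℝ, t ≠ 0 := by
    rw [MeasureTheory.ae_iff]
    have : {t : ℝ | ¬ t ≠ 0} = {0} := by ext t; simp
    rw [this]; exact Real.volume_singleton
  filter_upwards [h0] with t ht _
  simp [gfun, ht]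

lemma psi_hasDeriv (r : ℝ) : HasDerivAt psi (gfun r) r := by
  have he : psi = fun s => ∫ t in (0:ℝ)..s, gfun t := funext psi_eq
  rw [he]
  exact intervalIntegral.integral_hasDerivAt_right (gfun_cont.intervalIntegrable _ _)
    (gfun_cont.aestronglyMeasurable.stronglyMeasurableAtFilter) gfun_cont.continuousAt

lemma norm_line (x : E3) (t : ℝ) :
    ‖x + t • e1‖ = Real.sqrt ((x 0 + t)^2 + (x 1)^2 + (x 2)^2) := by
  rw [EuclideanSpace.norm_eq]
  congr 1
  rw [Fin.sum_univ_three]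
  simp [e1, EuclideanSpace.single_apply, Real.norm_eq_abs, sq_abs]
  try ring

lemma norm_hasDeriv (x : E3) (hx : x ≠ 0) :
    HasDerivAt (fun t : ℝ => ‖x + t • e1‖) (x 0 / ‖x‖) 0 := by
  have hnx : ‖x‖ ≠ 0 := norm_ne_zero_iff.mpr hx
  have hq : HasDerivAt (fun t : ℝ => (x 0 + t)^2 + (x 1)^2 + (x 2)^2) (2 * x 0) 0 := by
    have : HasDerivAt (fun t : ℝ => (x 0 + t)^2) (2 * x 0) 0 := by
      simpa using (((hasDerivAt_id (0:ℝ)).const_add (x 0)).fun_pow 2)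
    simpa using (this.add_const ((x 1)^2)).add_const ((x 2)^2)
  have hq0 : (x 0 + 0)^2 + (x 1)^2 + (x 2)^2 = ‖x‖^2 := by
    rw [EuclideanSpace.norm_eq, Real.sq_sqrt (by positivity), Fin.sum_univ_three]
    simp [Real.norm_eq_abs, sq_abs]
  have hne : (x 0 + 0)^2 + (x 1)^2 + (x 2)^2 ≠ 0 := by
    rw [hq0]; positivity
  have := (Real.hasDerivAt_sqrt hne).comp 0 hq
  have heq : (fun t : ℝ => Real.sqrt ((x 0 + t)^2 + (x 1)^2 + (x 2)^2))
      = fun t : ℝ => ‖x + t • e1‖ := by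
    funext t; rw [norm_line]
  rw [Function.comp_def, heq] at this
  refine this.congr_deriv ?_
  rw [hq0, Real.sqrt_sq (norm_nonneg x)]
  field_simp

theorem stmt16 (τ : ℝ) (hτ : 0 < τ) (x : E3) (hx : x ≠ 0) :
    HasLineDerivAt ℝ (Phi τ) (τ⁻¹ * (Ofun τ x - Npot x)) x e1 ∧
    τ⁻¹ * (Ofun τ x - Npot x)
      = (4*π*τ*‖x‖)⁻¹ * (Real.exp (-τ * (‖x‖ - x 0) / 2) - 1) := by
  have hnx : (0:ℝ) < ‖x‖ := norm_pos_iff.mpr hx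
  have hπ : (π:ℝ) ≠ 0 := Real.pi_ne_zero
  have hτ' : τ ≠ 0 := ne_of_gt hτ
  set r : ℝ := τ * (‖x‖ - x 0) / 2 with hr
  constructor
  · unfold HasLineDerivAt
    -- f(t) = Phi τ (x + t • e1)
    have hcoord : ∀ t : ℝ, (x + t • e1) 0 = x 0 + t := by
      intro t
      simp [e1, EuclideanSpace.single_apply]
    have hh : HasDerivAt (fun t : ℝ => τ * (‖x + t • e1‖ - (x + t • e1) 0) / 2)
        (τ * (x 0 / ‖x‖ - 1) / 2) 0 := by
      have h2 : HasDerivAt (fun t : ℝ => (x + t • e1) 0) 1 0 := by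
        have : HasDerivAt (fun t : ℝ => x 0 + t) 1 0 := by
          simpa using (hasDerivAt_id (0:ℝ)).const_add (x 0)
        exact this.congr_of_eventuallyEq (by filter_upwards with t; rw [hcoord])
      exact (((norm_hasDeriv x hx).sub h2).const_mul τ).div_const 2
    have hh0 : τ * (‖x + (0:ℝ) • e1‖ - (x + (0:ℝ) • e1) 0) / 2 = r := by
      simp [hr]
    have hpsi : HasDerivAt (fun t : ℝ => psi (τ * (‖x + t • e1‖ - (x + t • e1) 0) / 2))
        (gfun r * (τ * (x 0 / ‖x‖ - 1) / 2)) 0 := by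
      have h1 : HasDerivAt psi (gfun r)
          ((fun t : ℝ => τ * (‖x + t • e1‖ - (x + t • e1) 0) / 2) 0) := by
        simp only []; rw [hh0]; exact psi_hasDeriv r
      exact h1.comp 0 hh
    have hphi : HasDerivAt (fun t : ℝ => Phi τ (x + t • e1))
        ((4*π*τ)⁻¹ * (gfun r * (τ * (x 0 / ‖x‖ - 1) / 2))) 0 := by
      unfold Phi
      exact hpsi.const_mul _
    refine hphi.congr_deriv ?_
    -- value identity
    rcases eq_or_ne r 0 with hr0 | hr0
    · have h2 : τ * (‖x‖ - x 0) = 0 := by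
        have h3 := hr0
        rw [hr] at h3
        linarith
      have hxn : x 0 = ‖x‖ := by
        rcases mul_eq_zero.mp h2 with h | h
        · exact absurd h hτ'
        · linarith
      have hg : gfun r = 1 := by simp [gfun, hr0]
      simp only [Ofun, Npot, hg, hxn, sub_self, mul_zero, neg_zero, zero_mul, zero_div,
        Real.exp_zero, div_self hnx.ne']
      ring
    · have hg : gfun r = (1 - Real.exp (-r)) / r := by simp [gfun, hr0]
      have hexp : -τ * (‖x‖ - x 0) / 2 = -r := by rw [hr]; ring
      have key : τ * (x 0 / ‖x‖ - 1) / 2 = -r / ‖x‖ := by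
        rw [hr]; field_simp; ring
      rw [hg, key]
      simp only [Ofun, Npot, hexp]
      field_simp
      ring
  · have h1 : (4*π*τ*‖x‖) = τ * (4*π*‖x‖) := by ring
    unfold Ofun Npot
    rw [h1, mul_inv]
    ring


end
end
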